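/- Let R be a commutative ring, A a commutative R-algebra, and I ⊆ A an ideal such that the R-module I^n/I^{n+1} is flat for every n ≥ 0. Let R' be any commutative R-algebra and set A' = A ⊗_R R'. Then for every n ≥ 0: (1) the canonical map I^n ⊗_R R' → I^n·A' (onto the ideal of A' generated by the image of I^n) is an isomorphism of R'-modules, and (2) the canonical map (I^n/I^{n+1}) ⊗_R R' → (I^n·A')/(I^{n+1}·A') is an isomorphism of R'-modules. -/

import Mathlib

open scoped TensorProduct

open Function LinearMap

set_option maxHeartbeats 1000000 in
/-- If `M ⧸ N` is flat, then `N ⊗ Q → M ⊗ Q` is injective for every `Q`. -/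
lemma aux_rTensor_subtype_injective {R M Q : Type*} [CommRing R]
    [AddCommGroup M] [Module R M] [AddCommGroup Q] [Module R Q]
    (N : Submodule R M) (hf : Module.Flat R (M ⧸ N)) :
    Function.Injective (N.subtype.rTensor Q) := by
  set π : (Q →₀ R) →ₗ[R] Q := Finsupp.linearCombination R id with hπ
  have hπs : Function.Surjective π :=
    Finsupp.linearCombination_surjective R Function.surjective_id
  haveI : Module.Flat R (Q →₀ R) := inferInstance
  have hfinj : Function.Injective ((LinearMap.ker π).subtype.rTensor (M ⧸ N)) :=
    Module.Flat.rTensor_preserves_injective_linearMap _ (Submodule.injective_subtype _)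
  have hginj : Function.Injective (N.subtype.lTensor (Q →₀ R)) :=
    Module.Flat.lTensor_preserves_injective_linearMap _ (Submodule.injective_subtype _)
  have hlt : Function.Injective (N.subtype.lTensor Q) :=
    lTensor_injective_of_exact_of_exact_of_rTensor_injective (R := R)
      (M₁ := ↥(LinearMap.ker π)) (M₂ := Q →₀ R) (M₃ := Q)
      (N₁ := ↥N) (N₂ := M) (N₃ := M ⧸ N)
      (LinearMap.exact_subtype_ker_map π) hπs
      (LinearMap.exact_subtype_mkQ N) (Submodule.mkQ_surjective N)
      hfinj hginj
  have h : N.subtype.rTensor Q =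
      (TensorProduct.comm R Q M).toLinearMap ∘ₗ (N.subtype.lTensor Q) ∘ₗ
        (TensorProduct.comm R (↥N) Q).toLinearMap := by
    ext x q; rfl
  rw [h]
  exact (TensorProduct.comm R Q M).injective.comp
    (hlt.comp (TensorProduct.comm R (↥N) Q).injective)

/-- `rTensor` of a linear equivalence is injective. -/
lemma aux_rTensor_equiv_injective {R M N Q : Type*} [CommRing R]
    [AddCommMonoid M] [Module R M] [AddCommMonoid N] [Module R N]
    [AddCommMonoid Q] [Module R Q] (e : M ≃ₗ[R] N) :
    Function.Injective (e.toLinearMap.rTensor Q) := by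
  have : e.toLinearMap.rTensor Q =
      (TensorProduct.congr e (LinearEquiv.refl R Q)).toLinearMap := by
    ext x q; rfl
  rw [this]
  exact (TensorProduct.congr e (LinearEquiv.refl R Q)).injective

/-- Let `R` be a commutative ring, `A` a commutative `R`-algebra and
`I ⊆ A` an ideal such that each `R`-module `Iⁿ/Iⁿ⁺¹` is flat.  Let `R'` be a commutative
`R`-algebra and `A' = A ⊗[R] R'`.  Then for every `n`:
(1) the canonical map `Iⁿ ⊗[R] R' → A'` is injective with image the ideal `Iⁿ·A'`
generated by the image of `Iⁿ` (so `Iⁿ ⊗[R] R' ≅ Iⁿ·A'`), and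
(2) the canonical map `(Iⁿ/Iⁿ⁺¹) ⊗[R] R' → (Iⁿ·A')/(Iⁿ⁺¹·A')` is an isomorphism,
expressed by saying that the composite `ψ : Iⁿ ⊗[R] R' → A' → A'/(Iⁿ⁺¹·A')` has image
`(Iⁿ·A')/(Iⁿ⁺¹·A')` and kernel exactly the image of `Iⁿ⁺¹ ⊗[R] R' → Iⁿ ⊗[R] R'`
(recall `(Iⁿ/Iⁿ⁺¹) ⊗[R] R'` is the cokernel of `Iⁿ⁺¹ ⊗[R] R' → Iⁿ ⊗[R] R'`). -/
theorem statement12 {R A R' : Type*} [CommRing R] [CommRing A] [Algebra R A]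
    [CommRing R'] [Algebra R R'] (I : Ideal A)
    (hflat : ∀ n : ℕ, Module.Flat R
      ((Submodule.restrictScalars R (I ^ n)) ⧸
        (Submodule.comap (Submodule.restrictScalars R (I ^ n)).subtype
          (Submodule.restrictScalars R (I ^ (n + 1))))))
    (n : ℕ) :
    Function.Injective
      (TensorProduct.map (Submodule.restrictScalars R (I ^ n)).subtype
        (LinearMap.id : R' →ₗ[R] R')) ∧
    LinearMap.range
      (TensorProduct.map (Submodule.restrictScalars R (I ^ n)).subtype
        (LinearMap.id : R' →ₗ[R] R'))
      = Submodule.restrictScalars R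
          (Ideal.map (Algebra.TensorProduct.includeLeft : A →ₐ[R] A ⊗[R] R') (I ^ n)) ∧
    LinearMap.range
      ((Submodule.restrictScalars R
          (Ideal.map (Algebra.TensorProduct.includeLeft : A →ₐ[R] A ⊗[R] R')
            (I ^ (n + 1)))).mkQ
        ∘ₗ TensorProduct.map (Submodule.restrictScalars R (I ^ n)).subtype
            (LinearMap.id : R' →ₗ[R] R'))
      = Submodule.map
          (Submodule.restrictScalars R
            (Ideal.map (Algebra.TensorProduct.includeLeft : A →ₐ[R] A ⊗[R] R')
              (I ^ (n + 1)))).mkQ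
          (Submodule.restrictScalars R
            (Ideal.map (Algebra.TensorProduct.includeLeft : A →ₐ[R] A ⊗[R] R') (I ^ n))) ∧
    LinearMap.ker
      ((Submodule.restrictScalars R
          (Ideal.map (Algebra.TensorProduct.includeLeft : A →ₐ[R] A ⊗[R] R')
            (I ^ (n + 1)))).mkQ
        ∘ₗ TensorProduct.map (Submodule.restrictScalars R (I ^ n)).subtype
            (LinearMap.id : R' →ₗ[R] R'))
      = LinearMap.range
          (TensorProduct.map
            (Submodule.inclusion
              (show Submodule.restrictScalars R (I ^ (n + 1)) ≤
                  Submodule.restrictScalars R (I ^ n) from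
                fun x hx => Ideal.pow_le_pow_right (Nat.le_succ n) hx))
            (LinearMap.id : R' →ₗ[R] R')) := by
  -- notation
  have hFdef : ∀ m : ℕ,
      (TensorProduct.map (Submodule.restrictScalars R (I ^ m)).subtype
        (LinearMap.id : R' →ₗ[R] R'))
      = LinearMap.rTensor R' (Submodule.restrictScalars R (I ^ m)).subtype := fun _ => rfl
  -- Part 2 : range
  have hrange : ∀ m : ℕ,
      LinearMap.range (TensorProduct.map (Submodule.restrictScalars R (I ^ m)).subtype
        (LinearMap.id : R' →ₗ[R] R'))
      = Submodule.restrictScalars R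
          (Ideal.map (Algebra.TensorProduct.includeLeft : A →ₐ[R] A ⊗[R] R') (I ^ m)) := by
    intro m
    rw [hFdef m]
    exact (Ideal.map_includeLeft_eq (I ^ m)).symm
  -- Part 1 : injectivity, by induction
  have hinj : ∀ m : ℕ, Function.Injective
      (LinearMap.rTensor R' (Submodule.restrictScalars R (I ^ m)).subtype) := by
    intro m
    induction m with
    | zero =>
      have h0 : Submodule.restrictScalars R (I ^ 0) = (⊤ : Submodule R A) := by
        simp [Ideal.one_eq_top]
      suffices H : ∀ (p : Submodule R A), p = ⊤ →
          Function.Injective (LinearMap.rTensor R' p.subtype) from H _ h0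
      rintro p rfl
      exact aux_rTensor_equiv_injective (Submodule.topEquiv).symm.symm
    | succ k ih =>
      have hle : Submodule.restrictScalars R (I ^ (k + 1)) ≤
          Submodule.restrictScalars R (I ^ k) :=
        fun x hx => Ideal.pow_le_pow_right (Nat.le_succ k) hx
      have hcomp : (Submodule.restrictScalars R (I ^ (k + 1))).subtype
          = (Submodule.restrictScalars R (I ^ k)).subtype ∘ₗ Submodule.inclusion hle := by
        ext x; rfl
      rw [hcomp, LinearMap.rTensor_comp]
      refine ih.comp ?_
      have he : Submodule.inclusion hle
          = (Submodule.comap (Submodule.restrictScalars R (I ^ k)).subtype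
              (Submodule.restrictScalars R (I ^ (k + 1)))).subtype
            ∘ₗ (Submodule.comapSubtypeEquivOfLe hle).symm.toLinearMap := by
        ext x; rfl
      rw [he, LinearMap.rTensor_comp]
      exact (aux_rTensor_subtype_injective _ (hflat k)).comp
        (aux_rTensor_equiv_injective _)
  -- composition fact
  have hle : Submodule.restrictScalars R (I ^ (n + 1)) ≤
      Submodule.restrictScalars R (I ^ n) :=
    fun x hx => Ideal.pow_le_pow_right (Nat.le_succ n) hx
  have hcompT :
      (TensorProduct.map (Submodule.restrictScalars R (I ^ n)).subtype
        (LinearMap.id : R' →ₗ[R] R')) ∘ₗ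
      (TensorProduct.map (Submodule.inclusion hle) (LinearMap.id : R' →ₗ[R] R'))
      = TensorProduct.map (Submodule.restrictScalars R (I ^ (n + 1))).subtype
          (LinearMap.id : R' →ₗ[R] R') := by
    rw [← TensorProduct.map_comp]
    congr 1
  refine ⟨by rw [hFdef n]; exact hinj n, hrange n, ?_, ?_⟩
  · -- Part 3
    rw [LinearMap.range_comp, hrange n]
  · -- Part 4
    rw [LinearMap.ker_comp, Submodule.ker_mkQ, ← hrange (n + 1)]
    ext x
    simp only [Submodule.mem_comap, LinearMap.mem_range]
    constructor
    · rintro ⟨y, hy⟩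
      rw [← hcompT] at hy
      rw [hFdef n] at hy
      exact ⟨y, hinj n hy⟩
    · rintro ⟨y, rfl⟩
      exact ⟨y, by rw [← hcompT]; rfl⟩
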